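/- arXiv:2112.05743 — 2 statements merged into one kernel-verified Lean document; each statement's English description precedes it below -/
import Mathlib

section
/- Monotonicity argument for effective viscous flux: if p : [0,∞) → ℝ is nondecreasing and ρ_n ⇀ ρ and p(ρ_n) ⇀ q weakly in L¹ of a finite measure space, with ∫ (p(ρ_n) − q)(ρ_n − ρ) dμ → 0 as n → ∞, and p(ρ_n)ρ_n ⇀ r weakly in L¹, then ∫ r dμ ≥ ∫ q ρ dμ. -/
open MeasureTheory Filter
open scoped ENNReal

/-- Weak L¹ convergence: convergence of integrals against all bounded (L^∞) test
functions. -/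
def WeakL1Conv {X : Type*} [MeasurableSpace X] (μ : Measure X)
    (f : ℕ → X → ℝ) (g : X → ℝ) : Prop :=
  ∀ φ : X → ℝ, MemLp φ ⊤ μ →
    Tendsto (fun n => ∫ x, f n x * φ x ∂μ) atTop (nhds (∫ x, g x * φ x ∂μ))

lemma ae_nonneg_of_good_sets {X : Type*} [MeasurableSpace X] (μ : Measure X) [IsFiniteMeasure μ]
    (f : X → ℝ) (hf : Integrable f μ) (g : ℕ → X → ℝ) (hg : ∀ n, AEMeasurable (g n) μ)
    (H : ∀ B : Set X, MeasurableSet B → (∀ n, IntegrableOn (g n) B μ) →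
      0 ≤ ∫ x in B, f x ∂μ) :
    0 ≤ᵐ[μ] f := by
  have hff' : f =ᵐ[μ] hf.1.mk f := hf.1.ae_eq_mk
  set f' : X → ℝ := hf.1.mk f with hf'def
  have hf'm : Measurable f' := hf.1.stronglyMeasurable_mk.measurable
  have key : 0 ≤ᵐ[μ] f' := by
    by_contra hc
    rw [EventuallyLE, ae_iff] at hc
    have hU : {x | ¬ (0 : X → ℝ) x ≤ f' x} ⊆ ⋃ m : ℕ, {x | f' x ≤ -(1 / (m + 1))} := by
      intro x hx
      simp only [Set.mem_setOf_eq, Pi.zero_apply, not_le] at hx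
      obtain ⟨m, hm⟩ := exists_nat_gt (1 / (-f' x))
      have hfx : 0 < -f' x := by linarith
      have h1m : 1 / (-f' x) < m + 1 := by linarith
      have : 1 / ((m : ℝ) + 1) < -f' x := by
        rw [div_lt_iff₀ (by positivity)] at h1m ⊢
        nlinarith
      exact Set.mem_iUnion.2 ⟨m, by simp only [Set.mem_setOf_eq]; linarith⟩
    have hex : ∃ m : ℕ, μ {x | f' x ≤ -(1 / (m + 1))} ≠ 0 := by
      by_contra hall
      push_neg at hall
      exact hc (measure_mono_null hU (measure_iUnion_null hall))
    obtain ⟨m, hm⟩ := hex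
    set c : ℝ := -(1 / (m + 1)) with hc_def
    have hcneg : c < 0 := by
      have : (0:ℝ) < 1 / (m + 1) := by positivity
      rw [hc_def]; linarith
    set A : Set X := {x | f' x ≤ c} with hA_def
    have hAm : MeasurableSet A := measurableSet_le hf'm measurable_const
    have hAfin : μ A ≠ ⊤ := measure_ne_top μ A
    set g' : ℕ → X → ℝ := fun n => (hg n).mk (g n) with hg'_def
    have hg'm : ∀ n, Measurable (g' n) := fun n => (hg n).measurable_mk
    have hgg' : ∀ n, g n =ᵐ[μ] g' n := fun n => (hg n).ae_eq_mk
    have hMn : ∀ n : ℕ, ∃ M : ℕ, μ (A ∩ {x | (M:ℝ) < ‖g' n x‖}) < μ A * (2⁻¹)^(n+2) := by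
      intro n
      have hanti : Antitone (fun M : ℕ => A ∩ {x | (M:ℝ) < ‖g' n x‖}) := by
        intro a b hab x hx
        simp only [Set.mem_inter_iff, Set.mem_setOf_eq] at hx ⊢
        exact ⟨hx.1, lt_of_le_of_lt (by exact_mod_cast hab) hx.2⟩
      have hmeas : ∀ M : ℕ, NullMeasurableSet (A ∩ {x | (M:ℝ) < ‖g' n x‖}) μ := fun M =>
        (hAm.inter (measurableSet_lt measurable_const (hg'm n).norm)).nullMeasurableSet
      have hint : ⋂ M : ℕ, (A ∩ {x | (M:ℝ) < ‖g' n x‖}) = ∅ := by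
        ext x
        simp only [Set.mem_iInter, Set.mem_inter_iff, Set.mem_setOf_eq, Set.mem_empty_iff_false,
          iff_false, not_forall]
        obtain ⟨Mx, hMx⟩ := exists_nat_gt (‖g' n x‖)
        exact ⟨Mx, fun hcon => absurd hcon.2 (not_lt.2 hMx.le)⟩
      have htend := tendsto_measure_iInter_atTop hmeas hanti ⟨0, measure_ne_top μ _⟩
      rw [hint, measure_empty] at htend
      have hpos : 0 < μ A * (2⁻¹)^(n+2) := by
        refine ENNReal.mul_pos hm ?_
        simp [pow_ne_zero]
      exact (htend.eventually (gt_mem_nhds hpos)).exists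
    choose M hM using hMn
    set B : Set X := A ∩ ⋂ n, {x | ‖g' n x‖ ≤ M n} with hB_def
    have hBmeas : MeasurableSet B :=
      hAm.inter (MeasurableSet.iInter fun n => measurableSet_le (hg'm n).norm measurable_const)
    have hBsub : B ⊆ A := Set.inter_subset_left
    have hABdiff : A \ B ⊆ ⋃ n, (A ∩ {x | (M n:ℝ) < ‖g' n x‖}) := by
      intro x hx
      obtain ⟨hxA, hxB⟩ := hx
      rw [hB_def] at hxB
      have : ∃ n, ¬ ‖g' n x‖ ≤ (M n : ℝ) := by
        by_contra hall
        push_neg at hall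
        exact hxB ⟨hxA, Set.mem_iInter.2 fun n => (hall n)⟩
      obtain ⟨n, hn⟩ := this
      exact Set.mem_iUnion.2 ⟨n, hxA, not_le.1 hn⟩
    have hgeo : ∑' n : ℕ, ((2:ℝ≥0∞)⁻¹)^(n+2) = 2⁻¹ := by
      have h1 : ∑' n : ℕ, ((2:ℝ≥0∞)⁻¹)^(n+2) = ((2:ℝ≥0∞)⁻¹)^2 * ∑' n : ℕ, ((2:ℝ≥0∞)⁻¹)^n := by
        rw [← ENNReal.tsum_mul_left]
        congr 1; ext n; rw [pow_add, mul_comm]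
      rw [h1, ENNReal.tsum_geometric]
      rw [show (1 : ℝ≥0∞) - 2⁻¹ = 2⁻¹ by
        rw [ENNReal.sub_eq_of_eq_add (by simp)]
        rw [ENNReal.inv_two_add_inv_two]]
      rw [inv_inv, pow_two, mul_assoc, ENNReal.inv_mul_cancel (by simp) (by simp), mul_one]
    have hdiff : μ (A \ B) ≤ μ A * 2⁻¹ := by
      calc μ (A \ B) ≤ ∑' n, μ (A ∩ {x | (M n:ℝ) < ‖g' n x‖}) :=
            (measure_mono hABdiff).trans (measure_iUnion_le _)
        _ ≤ ∑' n : ℕ, μ A * (2⁻¹)^(n+2) := ENNReal.tsum_le_tsum fun n => (hM n).le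
        _ = μ A * 2⁻¹ := by rw [ENNReal.tsum_mul_left, hgeo]
    have hBne : μ B ≠ 0 := by
      intro h0
      have hsplit : μ A ≤ μ (A \ B) + μ B := by
        refine (measure_mono ?_).trans (measure_union_le _ _)
        intro x hx
        by_cases hxb : x ∈ B
        · exact Or.inr hxb
        · exact Or.inl ⟨hx, hxb⟩
      rw [h0, add_zero] at hsplit
      have hlt : μ A * 2⁻¹ < μ A := by
        rw [show μ A * 2⁻¹ = μ A / 2 from (div_eq_mul_inv _ _).symm]
        exact ENNReal.half_lt_self hm hAfin
      exact absurd (hsplit.trans hdiff) (not_le.2 hlt)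
    have hIB : ∀ n, IntegrableOn (g n) B μ := by
      intro n
      have hbd : IntegrableOn (g' n) B μ := by
        refine Integrable.mono' (integrable_const ((M n : ℝ))) ((hg'm n).aestronglyMeasurable.restrict) ?_
        refine ae_restrict_of_forall_mem hBmeas fun x hx => ?_
        exact Set.mem_iInter.1 hx.2 n
      exact hbd.congr ((hgg' n).restrict.symm)
    have h0le := H B hBmeas hIB
    have hfB : ∫ x in B, f x ∂μ = ∫ x in B, f' x ∂μ := integral_congr_ae (ae_restrict_of_ae hff')
    have hle : ∫ x in B, f' x ∂μ ≤ ∫ x in B, c ∂μ := by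
      refine setIntegral_mono_on ((hf.congr hff').integrableOn) (integrableOn_const (measure_ne_top μ B)) hBmeas fun x hx => ?_
      exact hBsub hx
    rw [setIntegral_const] at hle
    have htr : 0 < (μ B).toReal := ENNReal.toReal_pos hBne (measure_ne_top μ B)
    have : (μ B).toReal • c < 0 := by
      rw [smul_eq_mul]
      exact mul_neg_of_pos_of_neg htr hcneg
    rw [hfB] at h0le
    linarith [h0le.trans hle, (show μ.real B • c = (μ B).toReal • c from rfl)]
  filter_upwards [key, hff'] with x h1 h2
  simpa [h2] using h1

/-- Monotonicity argument for the effective viscous flux: if p is nondecreasing,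
ρ_n ⇀ ρ, p(ρ_n) ⇀ q, p(ρ_n)ρ_n ⇀ r weakly in L¹ of a finite measure space, and
∫ (p(ρ_n) − q)(ρ_n − ρ) dμ → 0, then ∫ r dμ ≥ ∫ q ρ dμ. -/
theorem stmt14 {X : Type*} [MeasurableSpace X] (μ : Measure X) [IsFiniteMeasure μ]
    (p : ℝ → ℝ) (hp : MonotoneOn p (Set.Ici 0))
    (ρn : ℕ → X → ℝ) (ρ q r : X → ℝ)
    (hρn_int : ∀ n, Integrable (ρn n) μ) (hρ_int : Integrable ρ μ)
    (hq_int : Integrable q μ) (hr_int : Integrable r μ)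
    (hqρ_int : Integrable (fun x => q x * ρ x) μ)
    (hρn_pos : ∀ n, ∀ᵐ x ∂μ, 0 ≤ ρn n x) (hρ_pos : ∀ᵐ x ∂μ, 0 ≤ ρ x)
    (h1 : WeakL1Conv μ ρn ρ)
    (h2 : WeakL1Conv μ (fun n x => p (ρn n x)) q)
    (h3 : WeakL1Conv μ (fun n x => p (ρn n x) * ρn n x) r)
    (h4 : Tendsto (fun n => ∫ x, (p (ρn n x) - q x) * (ρn n x - ρ x) ∂μ)
        atTop (nhds 0)) :
    ∫ x, q x * ρ x ∂μ ≤ ∫ x, r x ∂μ := by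
  classical
  set pt : ℝ → ℝ := fun t => p (max t 0) with hpt_def
  have hptmono : Monotone pt := fun a b hab =>
    hp (Set.mem_Ici.2 (le_max_right a 0)) (Set.mem_Ici.2 (le_max_right b 0))
      (max_le_max hab le_rfl)
  have hptmeas : Measurable pt := hptmono.measurable
  have hpt0 : ∀ t, pt 0 ≤ pt t := by
    intro t
    have h0 : pt 0 = p 0 := by simp [hpt_def]
    rw [h0, hpt_def]
    exact hp (Set.mem_Ici.2 le_rfl) (Set.mem_Ici.2 (le_max_right t 0)) (le_max_right t 0)
  have hpeq : ∀ n, ∀ᵐ x ∂μ, p (ρn n x) = pt (ρn n x) := by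
    intro n
    filter_upwards [hρn_pos n] with x hx
    rw [hpt_def]; simp [max_eq_left hx]
  have aeρn : ∀ n, AEMeasurable (ρn n) μ := fun n => (hρn_int n).aemeasurable
  have aeρ : AEMeasurable ρ μ := hρ_int.aemeasurable
  have aeq : AEMeasurable q μ := hq_int.aemeasurable
  -- main step
  have AEK : ∀ K : ℕ, ∀ᵐ x ∂μ,
      0 ≤ r x - q x * min (ρ x) ((K : ℝ) + 1)
        - pt (min (ρ x) ((K : ℝ) + 1)) * (ρ x - min (ρ x) ((K : ℝ) + 1)) := by
    intro K
    set k : ℝ := (K : ℝ) + 1 with hk_def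
    have hk1 : (1 : ℝ) ≤ k := by
      have : (0:ℝ) ≤ (K:ℝ) := Nat.cast_nonneg K
      rw [hk_def]; linarith
    have hk0 : (0 : ℝ) ≤ k := by linarith
    set ψ : X → ℝ := fun x => min (ρ x) k with hψ_def
    have aeψ : AEMeasurable ψ μ := aeρ.min aemeasurable_const
    have aeptψ : AEMeasurable (fun x => pt (ψ x)) μ := hptmeas.comp_aemeasurable aeψ
    have aeptρn : ∀ n, AEMeasurable (fun x => pt (ρn n x)) μ := fun n =>
      hptmeas.comp_aemeasurable (aeρn n)
    have hψ_bd : ∀ᵐ x ∂μ, 0 ≤ ψ x ∧ ψ x ≤ k := by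
      filter_upwards [hρ_pos] with x hx
      exact ⟨le_min hx hk0, min_le_right _ _⟩
    set C1 : ℝ := ‖pt 0‖ + ‖pt k‖ with hC1_def
    have hC1_0 : 0 ≤ C1 := by rw [hC1_def]; positivity
    have hCψ : ∀ᵐ x ∂μ, ‖pt (ψ x)‖ ≤ C1 := by
      filter_upwards [hψ_bd] with x hx
      have h1x : pt 0 ≤ pt (ψ x) := hptmono hx.1
      have h2x : pt (ψ x) ≤ pt k := hptmono hx.2
      rw [Real.norm_eq_abs, abs_le, hC1_def]
      constructor
      · have := neg_abs_le (pt 0); rw [Real.norm_eq_abs, Real.norm_eq_abs]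
        have := abs_nonneg (pt k); linarith [neg_abs_le (pt 0)]
      · rw [Real.norm_eq_abs, Real.norm_eq_abs]
        have := abs_nonneg (pt 0); linarith [le_abs_self (pt k)]
    have hψ_int : Integrable ψ μ := by
      refine Integrable.mono' (integrable_const k) aeψ.aestronglyMeasurable ?_
      filter_upwards [hψ_bd] with x hx
      rw [Real.norm_eq_abs, abs_le]; exact ⟨by linarith [hx.1], hx.2⟩
    have hqψ_int : Integrable (fun x => q x * ψ x) μ := by
      refine Integrable.mono' (hq_int.norm.const_mul k) (aeq.mul aeψ).aestronglyMeasurable ?_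
      filter_upwards [hψ_bd] with x hx
      rw [norm_mul]
      calc ‖q x‖ * ‖ψ x‖ ≤ ‖q x‖ * k := by
            refine mul_le_mul_of_nonneg_left ?_ (norm_nonneg _)
            rw [Real.norm_eq_abs, abs_le]; exact ⟨by linarith [hx.1], hx.2⟩
        _ = k * ‖q x‖ := mul_comm _ _
    have hptψρψ_int : Integrable (fun x => pt (ψ x) * (ρ x - ψ x)) μ := by
      refine Integrable.mono' ((hρ_int.sub hψ_int).norm.const_mul C1)
        (aeptψ.mul (aeρ.sub aeψ)).aestronglyMeasurable ?_
      filter_upwards [hCψ] with x hx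
      rw [norm_mul]
      exact mul_le_mul_of_nonneg_right hx (norm_nonneg _)
    have hf_int : Integrable
        (fun x => r x - q x * ψ x - pt (ψ x) * (ρ x - ψ x)) μ :=
      (hr_int.sub hqψ_int).sub hptψρψ_int
    set gf : ℕ → X → ℝ := fun n x => (pt (ρn n x) - pt 0) * ρn n x with hgf_def
    have hgmeas : ∀ n, AEMeasurable (gf n) μ := fun n =>
      ((aeptρn n).sub aemeasurable_const).mul (aeρn n)
    have hKey := ae_nonneg_of_good_sets μ
      (fun x => r x - q x * ψ x - pt (ψ x) * (ρ x - ψ x)) hf_int gf hgmeas ?_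
    · filter_upwards [hKey] with x hx
      simpa using hx
    intro B hB hgB
    -- test functions
    have hφ1 : MemLp (B.indicator (fun _ => (1:ℝ))) ⊤ μ := by
      refine memLp_top_of_bound (aestronglyMeasurable_const.indicator hB) 1 (ae_of_all _ fun x => ?_)
      by_cases hx : x ∈ B <;> simp [Set.indicator_of_mem, Set.indicator_of_notMem, hx]
    have hφ2 : MemLp (B.indicator ψ) ⊤ μ := by
      refine memLp_top_of_bound (aeψ.aestronglyMeasurable.indicator hB) k ?_
      filter_upwards [hψ_bd] with x hx
      by_cases hxB : x ∈ B
      · rw [Set.indicator_of_mem hxB, Real.norm_eq_abs, abs_le]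
        exact ⟨by linarith [hx.1], hx.2⟩
      · rw [Set.indicator_of_notMem hxB]; simpa using hk0
    have hφ3 : MemLp (B.indicator (fun x => pt (ψ x))) ⊤ μ := by
      refine memLp_top_of_bound (aeptψ.aestronglyMeasurable.indicator hB) C1 ?_
      filter_upwards [hCψ] with x hx
      by_cases hxB : x ∈ B
      · rwa [Set.indicator_of_mem hxB]
      · rw [Set.indicator_of_notMem hxB]; simpa using hC1_0
    -- the three convergences, in set-integral form
    have T1 : Tendsto (fun n => ∫ x in B, pt (ρn n x) * ρn n x ∂μ) atTop
        (nhds (∫ x in B, r x ∂μ)) := by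
      have h := h3 _ hφ1
      have e2 : ∫ x, r x * (B.indicator (fun _ => (1:ℝ)) x) ∂μ = ∫ x in B, r x ∂μ := by
        rw [← integral_indicator hB]
        refine integral_congr_ae (ae_of_all _ fun x => ?_)
        by_cases hx : x ∈ B <;>
          simp [Set.indicator_of_mem, Set.indicator_of_notMem, hx]
      rw [e2] at h
      refine Tendsto.congr (fun n => ?_) h
      rw [← integral_indicator hB]
      refine integral_congr_ae ?_
      filter_upwards [hpeq n] with x hx
      by_cases hxB : x ∈ B
      · simp [Set.indicator_of_mem hxB, hx]
      · simp [Set.indicator_of_notMem hxB]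
    have T2 : Tendsto (fun n => ∫ x in B, pt (ρn n x) * ψ x ∂μ) atTop
        (nhds (∫ x in B, q x * ψ x ∂μ)) := by
      have h := h2 _ hφ2
      have e2 : ∫ x, q x * (B.indicator ψ x) ∂μ = ∫ x in B, q x * ψ x ∂μ := by
        rw [← integral_indicator hB]
        refine integral_congr_ae (ae_of_all _ fun x => ?_)
        by_cases hx : x ∈ B <;>
          simp [Set.indicator_of_mem, Set.indicator_of_notMem, hx]
      rw [e2] at h
      refine Tendsto.congr (fun n => ?_) h
      rw [← integral_indicator hB]
      refine integral_congr_ae ?_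
      filter_upwards [hpeq n] with x hx
      by_cases hxB : x ∈ B
      · simp [Set.indicator_of_mem hxB, hx]
      · simp [Set.indicator_of_notMem hxB]
    have T3 : Tendsto (fun n => ∫ x in B, ρn n x * pt (ψ x) ∂μ) atTop
        (nhds (∫ x in B, ρ x * pt (ψ x) ∂μ)) := by
      have h := h1 _ hφ3
      have e2 : ∫ x, ρ x * (B.indicator (fun y => pt (ψ y)) x) ∂μ
          = ∫ x in B, ρ x * pt (ψ x) ∂μ := by
        rw [← integral_indicator hB]
        refine integral_congr_ae (ae_of_all _ fun x => ?_)
        by_cases hx : x ∈ B <;>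
          simp [Set.indicator_of_mem, Set.indicator_of_notMem, hx]
      rw [e2] at h
      refine Tendsto.congr (fun n => ?_) h
      rw [← integral_indicator hB]
      refine integral_congr_ae (ae_of_all _ fun x => ?_)
      by_cases hxB : x ∈ B
      · simp [Set.indicator_of_mem hxB]
      · simp [Set.indicator_of_notMem hxB]
    -- nonnegativity of each term of the sequence
    have hJ : ∀ n, 0 ≤ (∫ x in B, pt (ρn n x) * ρn n x ∂μ)
        - (∫ x in B, pt (ρn n x) * ψ x ∂μ)
        - (∫ x in B, ρn n x * pt (ψ x) ∂μ)
        + (∫ x in B, pt (ψ x) * ψ x ∂μ) := by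
      intro n
      have I1 : IntegrableOn (fun x => pt (ρn n x) * ρn n x) B μ := by
        have he : (fun x => pt (ρn n x) * ρn n x)
            = fun x => gf n x + pt 0 * ρn n x := by
          funext x; rw [hgf_def]; ring
        rw [he]
        exact (hgB n).add ((hρn_int n).const_mul (pt 0)).integrableOn
      have I2 : IntegrableOn (fun x => pt (ρn n x) * ψ x) B μ := by
        refine Integrable.mono'
          (g := fun x => k * ((‖pt 0‖ + (pt k - pt 0)) + gf n x))
          ((((integrable_const _).integrableOn.add (hgB n)).const_mul k))
          ((aeptρn n).mul aeψ).aestronglyMeasurable.restrict ?_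
        refine ae_restrict_of_ae ?_
        filter_upwards [hρn_pos n, hψ_bd] with x hxn hxψ
        have h0t : pt 0 ≤ pt (ρn n x) := hpt0 _
        have hgfx : gf n x = (pt (ρn n x) - pt 0) * ρn n x := rfl
        have hcase : pt (ρn n x) - pt 0 ≤ (pt k - pt 0) + gf n x := by
          rw [hgfx]
          rcases le_total (ρn n x) k with h | h
          · have hmono := hptmono h
            have hg0 : 0 ≤ (pt (ρn n x) - pt 0) * ρn n x :=
              mul_nonneg (by linarith) hxn
            linarith
          · have h1x : (1 : ℝ) ≤ ρn n x := le_trans hk1 h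
            have hge : pt (ρn n x) - pt 0 ≤ (pt (ρn n x) - pt 0) * ρn n x :=
              le_mul_of_one_le_right (by linarith) h1x
            have hk0' : pt 0 ≤ pt k := hpt0 k
            linarith
        have habs : |pt (ρn n x)| ≤ |pt 0| + (pt (ρn n x) - pt 0) :=
          abs_le.2 ⟨by linarith [neg_abs_le (pt 0)], by linarith [le_abs_self (pt 0)]⟩
        have hψa : |ψ x| ≤ k := abs_le.2 ⟨by linarith [hxψ.1], hxψ.2⟩
        rw [Real.norm_eq_abs, abs_mul]
        calc |pt (ρn n x)| * |ψ x|
            ≤ (|pt 0| + (pt (ρn n x) - pt 0)) * k := by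
              refine mul_le_mul habs hψa (abs_nonneg _) ?_
              exact le_trans (abs_nonneg _) habs
          _ ≤ k * ((‖pt 0‖ + (pt k - pt 0)) + gf n x) := by
              rw [mul_comm, Real.norm_eq_abs]
              refine mul_le_mul_of_nonneg_left ?_ hk0
              linarith
      have I3 : IntegrableOn (fun x => ρn n x * pt (ψ x)) B μ := by
        refine Integrable.mono' ((hρn_int n).norm.const_mul C1).integrableOn
          ((aeρn n).mul aeptψ).aestronglyMeasurable.restrict ?_
        refine ae_restrict_of_ae ?_
        filter_upwards [hCψ] with x hx
        rw [norm_mul, mul_comm (C1 : ℝ) _]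
        exact mul_le_mul_of_nonneg_left hx (norm_nonneg _)
      have I4 : IntegrableOn (fun x => pt (ψ x) * ψ x) B μ := by
        refine Integrable.mono' (integrable_const (C1 * k)).integrableOn
          (aeptψ.mul aeψ).aestronglyMeasurable.restrict ?_
        refine ae_restrict_of_ae ?_
        filter_upwards [hCψ, hψ_bd] with x hx hxψ
        rw [norm_mul]
        refine mul_le_mul hx ?_ (norm_nonneg _) hC1_0
        rw [Real.norm_eq_abs, abs_le]; exact ⟨by linarith [hxψ.1], hxψ.2⟩
      have hw : 0 ≤ ∫ x in B, (pt (ρn n x) - pt (ψ x)) * (ρn n x - ψ x) ∂μ := by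
        refine setIntegral_nonneg hB fun x _ => ?_
        rcases le_total (ψ x) (ρn n x) with h | h
        · exact mul_nonneg (sub_nonneg.2 (hptmono h)) (sub_nonneg.2 h)
        · have h1' : pt (ρn n x) - pt (ψ x) ≤ 0 := sub_nonpos.2 (hptmono h)
          have h2' : ρn n x - ψ x ≤ 0 := sub_nonpos.2 h
          nlinarith
      have hsplit : ∫ x in B, (pt (ρn n x) - pt (ψ x)) * (ρn n x - ψ x) ∂μ
          = (∫ x in B, pt (ρn n x) * ρn n x ∂μ)
            - (∫ x in B, pt (ρn n x) * ψ x ∂μ)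
            - ((∫ x in B, ρn n x * pt (ψ x) ∂μ)
              - (∫ x in B, pt (ψ x) * ψ x ∂μ)) := by
        have he : (fun x => (pt (ρn n x) - pt (ψ x)) * (ρn n x - ψ x))
            = fun x => (pt (ρn n x) * ρn n x - pt (ρn n x) * ψ x)
              - (ρn n x * pt (ψ x) - pt (ψ x) * ψ x) := by
          funext x; ring
        have I12 : Integrable (fun x => pt (ρn n x) * ρn n x - pt (ρn n x) * ψ x)
            (μ.restrict B) := I1.sub I2
        have I34 : Integrable (fun x => ρn n x * pt (ψ x) - pt (ψ x) * ψ x)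
            (μ.restrict B) := I3.sub I4
        rw [he, integral_sub I12 I34, integral_sub I1 I2, integral_sub I3 I4]
      rw [hsplit] at hw
      linarith
    have Tlim := ((T1.sub T2).sub T3).add
      (tendsto_const_nhds (x := ∫ x in B, pt (ψ x) * ψ x ∂μ) (f := atTop (α := ℕ)))
    have hlim0 : 0 ≤ (∫ x in B, r x ∂μ) - (∫ x in B, q x * ψ x ∂μ)
        - (∫ x in B, ρ x * pt (ψ x) ∂μ) + (∫ x in B, pt (ψ x) * ψ x ∂μ) :=
      ge_of_tendsto' Tlim hJ
    -- identify with ∫_B f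
    have Iρptψ : IntegrableOn (fun x => ρ x * pt (ψ x)) B μ := by
      refine Integrable.mono' (hρ_int.norm.const_mul C1).integrableOn
        (aeρ.mul aeptψ).aestronglyMeasurable.restrict ?_
      refine ae_restrict_of_ae ?_
      filter_upwards [hCψ] with x hx
      rw [norm_mul, mul_comm (C1 : ℝ) _]
      exact mul_le_mul_of_nonneg_left hx (norm_nonneg _)
    have Iptψψ : IntegrableOn (fun x => pt (ψ x) * ψ x) B μ := by
      refine Integrable.mono' (integrable_const (C1 * k)).integrableOn
        (aeptψ.mul aeψ).aestronglyMeasurable.restrict ?_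
      refine ae_restrict_of_ae ?_
      filter_upwards [hCψ, hψ_bd] with x hx hxψ
      rw [norm_mul]
      refine mul_le_mul hx ?_ (norm_nonneg _) hC1_0
      rw [Real.norm_eq_abs, abs_le]; exact ⟨by linarith [hxψ.1], hxψ.2⟩
    have hfeq : ∫ x in B, (r x - q x * ψ x - pt (ψ x) * (ρ x - ψ x)) ∂μ
        = (∫ x in B, r x ∂μ) - (∫ x in B, q x * ψ x ∂μ)
          - ((∫ x in B, ρ x * pt (ψ x) ∂μ) - (∫ x in B, pt (ψ x) * ψ x ∂μ)) := by
      have he : (fun x => r x - q x * ψ x - pt (ψ x) * (ρ x - ψ x))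
          = fun x => (r x - q x * ψ x) - (ρ x * pt (ψ x) - pt (ψ x) * ψ x) := by
        funext x; ring
      have J12 : Integrable (fun x => r x - q x * ψ x) (μ.restrict B) :=
        hr_int.integrableOn.sub hqψ_int.integrableOn
      have J34 : Integrable (fun x => ρ x * pt (ψ x) - pt (ψ x) * ψ x) (μ.restrict B) :=
        Iρptψ.sub Iptψψ
      rw [he, integral_sub J12 J34,
        integral_sub hr_int.integrableOn hqψ_int.integrableOn, integral_sub Iρptψ Iptψψ]
    rw [hfeq]
    linarith
  -- combine over K
  have hae : ∀ᵐ x ∂μ, q x * ρ x ≤ r x := by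
    have hall : ∀ᵐ x ∂μ, ∀ K : ℕ,
        0 ≤ r x - q x * min (ρ x) ((K : ℝ) + 1)
          - pt (min (ρ x) ((K : ℝ) + 1)) * (ρ x - min (ρ x) ((K : ℝ) + 1)) :=
      (ae_all_iff).2 AEK
    filter_upwards [hall, hρ_pos] with x hx hρx
    have hxK := hx ⌈ρ x⌉₊
    have hmin : min (ρ x) ((⌈ρ x⌉₊ : ℝ) + 1) = ρ x :=
      min_eq_left (by linarith [Nat.le_ceil (ρ x)])
    rw [hmin] at hxK
    nlinarith [hxK]
  exact integral_mono_ae hqρ_int hr_int hae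
end

section
/- If z ln z is convex, ρ_n ≥ 0 converge weakly to ρ in L¹ of a finite measure space, and limsup_n ∫ ρ_n ln ρ_n dμ ≤ ∫ ρ ln ρ dμ < ∞, then ρ_n → ρ strongly in L¹. -/
open MeasureTheory Filter
open ENNReal

lemma legendre (z s : ℝ) (hz : 0 ≤ z) : s * z - Real.exp (s - 1) ≤ z * Real.log z := by
  rcases eq_or_lt_of_le hz with h | h
  · simp [← h, Real.exp_pos (s-1) |>.le]
  · have h1 := Real.add_one_le_exp (s - 1 - Real.log z)
    have h2 : Real.exp (s - 1 - Real.log z) = Real.exp (s-1) / z := by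
      rw [Real.exp_sub, Real.exp_log h]
    rw [h2, le_div_iff₀ h] at h1
    nlinarith

lemma log_ge (t : ℝ) (ht : 0 < t) : 1 - 1/t ≤ Real.log t := by
  have h := Real.log_le_sub_one_of_pos (x := 1/t) (by positivity)
  rw [one_div, Real.log_inv] at h
  rw [one_div]
  linarith

lemma clamp_abs (t c : ℝ) (hc : 0 ≤ c) : |max (-c) (min t c)| ≤ |t| := by
  rw [abs_le]
  constructor
  · exact le_max_of_le_right (le_min (neg_abs_le t) (by linarith [abs_nonneg t]))
  · exact max_le (by linarith [abs_nonneg t]) ((min_le_left _ _).trans (le_abs_self t))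

lemma klpart (x y : ℝ) (hx : 0 ≤ x) (hy : 0 < y) :
    2*x - 2*Real.sqrt x*Real.sqrt y ≤ x*Real.log x - x*Real.log y := by
  rcases eq_or_lt_of_le hx with h | h
  · simp [← h]
  · have hsx : (0:ℝ) < Real.sqrt x := Real.sqrt_pos.mpr h
    have hsy : (0:ℝ) < Real.sqrt y := Real.sqrt_pos.mpr hy
    have hlog := log_ge (Real.sqrt x / Real.sqrt y) (by positivity)
    have e1 : Real.log (Real.sqrt x / Real.sqrt y) = Real.log x / 2 - Real.log y / 2 := by
      rw [Real.log_div hsx.ne' hsy.ne', Real.log_sqrt hx, Real.log_sqrt hy.le]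
    have e2 : 1 - 1/(Real.sqrt x / Real.sqrt y) = 1 - Real.sqrt y / Real.sqrt x := by
      rw [one_div, inv_div]
    rw [e1, e2] at hlog
    have hx2 : Real.sqrt x * Real.sqrt x = x := Real.mul_self_sqrt hx
    have h3 : x * (Real.sqrt y / Real.sqrt x) = Real.sqrt x * Real.sqrt y := by
      field_simp
      nlinarith
    nlinarith [mul_le_mul_of_nonneg_left hlog (by positivity : (0:ℝ) ≤ 2*x)]

lemma sqdiff (a b : ℝ) (ha : 0 ≤ a) (hb : 0 ≤ b) :
    (Real.sqrt a - Real.sqrt b)^2 / 2 ≤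
      a*Real.log a + b*Real.log b - 2*(((a+b)/2) * Real.log ((a+b)/2)) := by
  rcases eq_or_lt_of_le (by positivity : (0:ℝ) ≤ a + b) with h | h
  · have ha0 : a = 0 := by linarith
    have hb0 : b = 0 := by linarith
    simp [ha0, hb0]
  · set m := (a+b)/2 with hm
    have hmpos : 0 < m := by positivity
    have k1 := klpart a m ha hmpos
    have k2 := klpart b m hb hmpos
    have hsa := Real.sqrt_nonneg a
    have hsb := Real.sqrt_nonneg b
    have hsm := Real.sqrt_nonneg m
    have ea : Real.sqrt a * Real.sqrt a = a := Real.mul_self_sqrt ha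
    have eb : Real.sqrt b * Real.sqrt b = b := Real.mul_self_sqrt hb
    have em : Real.sqrt m * Real.sqrt m = m := Real.mul_self_sqrt hmpos.le
    have e2 : a + b = 2*m := by rw [hm]; ring
    have elog : 2*(m*Real.log m) = a*Real.log m + b*Real.log m := by
      rw [hm]; ring
    have key : (Real.sqrt a - Real.sqrt b)^2/2 ≤
        2*(a+b) - 2*Real.sqrt m*(Real.sqrt a + Real.sqrt b) := by
      nlinarith [sq_nonneg (Real.sqrt a + Real.sqrt b - 2*Real.sqrt m), ea, eb, em, e2]
    linarith [k1, k2]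

lemma amgm (a b ε : ℝ) (ha : 0 ≤ a) (hb : 0 ≤ b) (hε : 0 < ε) :
    |a - b| ≤ (Real.sqrt a - Real.sqrt b)^2 / (2*ε) + ε*(a+b) := by
  set p := Real.sqrt a
  set q := Real.sqrt b
  have hsa := Real.sqrt_nonneg a
  have hsb := Real.sqrt_nonneg b
  have ea : p * p = a := Real.mul_self_sqrt ha
  have eb : q * q = b := Real.mul_self_sqrt hb
  set t := |p - q| with htdef
  set s := p + q with hsdef
  have hs : 0 ≤ s := by positivity
  have habs : |a - b| = t * s := by
    rw [htdef, ← abs_of_nonneg hs, ← abs_mul]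
    congr 1
    nlinarith
  have h1 : t*s*(2*ε) ≤ t^2 + ε^2*s^2 := by nlinarith [sq_nonneg (t - ε*s)]
  have h2 : t*s ≤ (t^2 + ε^2*s^2)/(2*ε) := (le_div_iff₀ (by positivity)).mpr h1
  have h3 : (t^2 + ε^2*s^2)/(2*ε) = t^2/(2*ε) + ε*s^2/2 := by field_simp
  have ht2 : t^2 = (p - q)^2 := sq_abs _
  have h4 : ε*s^2/2 ≤ ε*(a+b) := by
    nlinarith [mul_nonneg hε.le (sq_nonneg (p - q)), ea, eb]
  rw [habs]
  calc t * s ≤ t^2/(2*ε) + ε*s^2/2 := by rw [← h3]; exact h2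
    _ ≤ (p - q)^2/(2*ε) + ε*(a+b) := by rw [ht2]; linarith

lemma lsc {X : Type*} [MeasurableSpace X] (μ : Measure X) [IsFiniteMeasure μ]
    (σ : ℕ → X → ℝ) (ρ ρ' : X → ℝ)
    (hρ'meas : Measurable ρ') (hρρ' : ρ =ᵐ[μ] ρ')
    (hρ_int : Integrable ρ μ) (hρ_pos : ∀ᵐ x ∂μ, 0 ≤ ρ x)
    (hlog_int : Integrable (fun x => ρ x * Real.log (ρ x)) μ)
    (hσ_int : ∀ n, Integrable (σ n) μ)
    (hσ_pos : ∀ n, ∀ᵐ x ∂μ, 0 ≤ σ n x)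
    (hσlog_int : ∀ n, Integrable (fun x => σ n x * Real.log (σ n x)) μ)
    (hw : ∀ φ : X → ℝ, MemLp φ ⊤ μ →
      Tendsto (fun n => ∫ x, σ n x * φ x ∂μ) atTop (nhds (∫ x, ρ x * φ x ∂μ)))
    {ε : ℝ} (hε : 0 < ε) :
    ∀ᶠ n in atTop,
      ∫ x, ρ x * Real.log (ρ x) ∂μ - ε ≤ ∫ x, σ n x * Real.log (σ n x) ∂μ := by
  set φf : ℕ → X → ℝ :=
    fun K x => if 0 < ρ' x then max (-(K:ℝ)) (min (Real.log (ρ' x) + 1) K) else -(K:ℝ)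
    with hφf
  have hφmeas : ∀ K, Measurable (φf K) := by
    intro K
    exact Measurable.ite (measurableSet_lt measurable_const hρ'meas)
      (measurable_const.max (((Real.measurable_log.comp hρ'meas).add_const 1).min
        measurable_const)) measurable_const
  have hφbd : ∀ K x, |φf K x| ≤ (K:ℝ) := by
    intro K x
    have hK0 : (0:ℝ) ≤ (K:ℝ) := by positivity
    simp only [hφf]
    split_ifs with hc
    · rw [abs_le]
      exact ⟨le_max_left _ _, max_le (by linarith) (min_le_right _ _)⟩
    · rw [abs_neg, abs_of_nonneg hK0]
  have hφmem : ∀ K, MemLp (φf K) ⊤ μ := fun K =>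
    memLp_top_of_bound (hφmeas K).aestronglyMeasurable _
      (ae_of_all _ fun x => (Real.norm_eq_abs _) ▸ hφbd K x)
  have hevφ : ∀ x, 0 < ρ' x → ∀ᶠ K : ℕ in atTop, φf K x = Real.log (ρ' x) + 1 := by
    intro x hc
    obtain ⟨N, hN⟩ := exists_nat_ge |Real.log (ρ' x) + 1|
    filter_upwards [eventually_ge_atTop N] with K hK
    have hKR : |Real.log (ρ' x) + 1| ≤ (K:ℝ) := hN.trans (by exact_mod_cast hK)
    simp only [hφf, if_pos hc]
    rw [min_eq_left ((le_abs_self _).trans hKR),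
      max_eq_right (by linarith [neg_abs_le (Real.log (ρ' x) + 1)])]
  -- DCT A
  have hA : Tendsto (fun K => ∫ x, ρ x * φf K x ∂μ) atTop
      (nhds (∫ x, (ρ x * Real.log (ρ x) + ρ x) ∂μ)) := by
    apply tendsto_integral_of_dominated_convergence
      (F := fun K x => ρ x * φf K x)
      (bound := fun x => |ρ x * Real.log (ρ x)| + |ρ x|)
      (fun K => hρ_int.1.mul (hφmeas K).aestronglyMeasurable)
      (hlog_int.abs.add hρ_int.abs)
    · intro K
      filter_upwards [hρρ', hρ_pos] with x hx hpos
      by_cases hc : 0 < ρ' x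
      · have h1 : |φf K x| ≤ |Real.log (ρ' x) + 1| := by
          simp only [hφf, if_pos hc]; exact clamp_abs _ _ (by positivity)
        have h2 : |Real.log (ρ' x) + 1| ≤ |Real.log (ρ x)| + 1 := by
          rw [hx]; exact (abs_add_le _ _).trans (by norm_num)
        rw [Real.norm_eq_abs, abs_mul]
        calc |ρ x| * |φf K x| ≤ |ρ x| * (|Real.log (ρ x)| + 1) :=
              mul_le_mul_of_nonneg_left (h1.trans h2) (abs_nonneg _)
          _ = |ρ x * Real.log (ρ x)| + |ρ x| := by rw [abs_mul]; ring
      · have hx0 : ρ x = 0 := le_antisymm (hx ▸ le_of_not_gt hc) hpos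
        simp [hx0]
    · filter_upwards [hρρ', hρ_pos] with x hx hpos
      by_cases hc : 0 < ρ' x
      · have heq : (fun K : ℕ => ρ x * (Real.log (ρ' x) + 1)) =ᶠ[atTop]
            fun K => ρ x * φf K x := by
          filter_upwards [hevφ x hc] with K hK using by rw [hK]
        refine Tendsto.congr' heq ?_
        have he : ρ x * (Real.log (ρ' x) + 1) = ρ x * Real.log (ρ x) + ρ x := by
          rw [← hx]; ring
        rw [he]
        exact tendsto_const_nhds
      · have hx0 : ρ x = 0 := le_antisymm (hx ▸ le_of_not_gt hc) hpos
        simp only [hx0, zero_mul, Real.log_zero, mul_zero, add_zero, zero_add]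
        exact tendsto_const_nhds
  -- DCT B
  have hB : Tendsto (fun K => ∫ x, Real.exp (φf K x - 1) ∂μ) atTop
      (nhds (∫ x, ρ x ∂μ)) := by
    apply tendsto_integral_of_dominated_convergence
      (F := fun K x => Real.exp (φf K x - 1))
      (bound := fun x => 1 + |ρ x|)
      (fun K => (Real.measurable_exp.comp ((hφmeas K).sub_const 1)).aestronglyMeasurable)
      ((integrable_const 1).add hρ_int.abs)
    · intro K
      filter_upwards [hρρ', hρ_pos] with x hx hpos
      rw [Real.norm_eq_abs, abs_of_pos (Real.exp_pos _)]
      by_cases hc : 0 < ρ' x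
      · have h1 : φf K x - 1 ≤ max (-1) (Real.log (ρ' x)) := by
          simp only [hφf, if_pos hc]
          have h0 : max (-(K:ℝ)) (min (Real.log (ρ' x) + 1) K) ≤
              max 0 (Real.log (ρ' x) + 1) :=
            max_le (le_max_of_le_left (neg_nonpos.mpr (Nat.cast_nonneg K))) (le_max_of_le_right (min_le_left _ _))
          have h2 : max (0:ℝ) (Real.log (ρ' x) + 1) - 1 = max (-1) (Real.log (ρ' x)) := by
            rcases max_cases (0:ℝ) (Real.log (ρ' x) + 1) with ⟨h3, h4⟩ | ⟨h3, h4⟩ <;>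
              rcases max_cases (-1:ℝ) (Real.log (ρ' x)) with ⟨h5, h6⟩ | ⟨h5, h6⟩ <;> linarith
          linarith
        calc Real.exp (φf K x - 1) ≤ Real.exp (max (-1) (Real.log (ρ' x))) :=
              Real.exp_le_exp.mpr h1
          _ = max (Real.exp (-1)) (ρ' x) := by
              rw [Real.exp_monotone.map_max, Real.exp_log hc]
          _ ≤ 1 + |ρ x| := by
              refine max_le ?_ ?_
              · have := (Real.exp_le_exp.mpr (by norm_num : (-1:ℝ) ≤ 0)).trans_eq
                  Real.exp_zero
                linarith [abs_nonneg (ρ x)]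
              · rw [hx]; linarith [le_abs_self (ρ' x)]
      · have h1 : φf K x = -(K:ℝ) := by simp only [hφf, if_neg hc]
        rw [h1]
        have h2 : Real.exp (-(K:ℝ) - 1) ≤ 1 :=
          (Real.exp_le_exp.mpr (by have : (0:ℝ) ≤ (K:ℝ) := Nat.cast_nonneg K; linarith)).trans_eq
            Real.exp_zero
        linarith [abs_nonneg (ρ x)]
    · filter_upwards [hρρ', hρ_pos] with x hx hpos
      by_cases hc : 0 < ρ' x
      · have heq : (fun K : ℕ => ρ' x) =ᶠ[atTop] fun K => Real.exp (φf K x - 1) := by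
          filter_upwards [hevφ x hc] with K hK
          rw [hK, show Real.log (ρ' x) + 1 - 1 = Real.log (ρ' x) by ring, Real.exp_log hc]
        refine Tendsto.congr' heq ?_
        rw [hx]
        exact tendsto_const_nhds
      · have hx0 : ρ x = 0 := le_antisymm (hx ▸ le_of_not_gt hc) hpos
        have h1 : ∀ K : ℕ, φf K x = -(K:ℝ) := fun K => by simp only [hφf, if_neg hc]
        simp only [h1, hx0]
        exact Real.tendsto_exp_atBot.comp
          (tendsto_atBot_add_const_right _ _
            (tendsto_neg_atBot_iff.mpr tendsto_natCast_atTop_atTop))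
  -- combine
  have hC : Tendsto (fun K => ∫ x, ρ x * φf K x ∂μ - ∫ x, Real.exp (φf K x - 1) ∂μ)
      atTop (nhds (∫ x, ρ x * Real.log (ρ x) ∂μ)) := by
    have he : ∫ x, (ρ x * Real.log (ρ x) + ρ x) ∂μ - ∫ x, ρ x ∂μ
        = ∫ x, ρ x * Real.log (ρ x) ∂μ := by
      rw [integral_add hlog_int hρ_int]; ring
    exact he ▸ hA.sub hB
  obtain ⟨K, hK⟩ := (hC.eventually (eventually_gt_nhds (by linarith :
      ∫ x, ρ x * Real.log (ρ x) ∂μ - ε/2 < ∫ x, ρ x * Real.log (ρ x) ∂μ))).exists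
  -- integrabilities
  have hσφ_int : ∀ n, Integrable (fun x => σ n x * φf K x) μ := by
    intro n
    have := (hσ_int n).bdd_mul (c := K) (hφmeas K).aestronglyMeasurable
      (ae_of_all _ fun x => (Real.norm_eq_abs _) ▸ hφbd K x)
    exact this.congr (ae_of_all _ fun x => mul_comm _ _)
  have hexp_int : Integrable (fun x => Real.exp (φf K x - 1)) μ := by
    refine (integrable_const (Real.exp (K - 1))).mono'
      ((Real.measurable_exp.comp ((hφmeas K).sub_const 1)).aestronglyMeasurable)
      (ae_of_all _ fun x => ?_)
    rw [Real.norm_eq_abs, abs_of_pos (Real.exp_pos _)]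
    exact Real.exp_le_exp.mpr (by linarith [le_abs_self (φf K x), hφbd K x])
  -- per-n lower bound
  have hlow : ∀ n, ∫ x, σ n x * φf K x ∂μ - ∫ x, Real.exp (φf K x - 1) ∂μ
      ≤ ∫ x, σ n x * Real.log (σ n x) ∂μ := by
    intro n
    rw [← integral_sub (hσφ_int n) hexp_int]
    refine integral_mono_ae ((hσφ_int n).sub hexp_int) (hσlog_int n) ?_
    filter_upwards [hσ_pos n] with x hx
    have := legendre (σ n x) (φf K x) hx
    simpa [mul_comm] using this
  -- weak convergence for φf K
  have hwn := hw (φf K) (hφmem K)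
  filter_upwards [hwn.eventually (eventually_gt_nhds (by linarith :
      ∫ x, ρ x * φf K x ∂μ - ε/2 < ∫ x, ρ x * φf K x ∂μ))] with n hn
  have := hlow n
  linarith

/-- If ρ_n ≥ 0 converge weakly to ρ in L¹ of a finite measure space, the quantities
ρ_n ln ρ_n are uniformly in L¹, and limsup_n ∫ ρ_n ln ρ_n ≤ ∫ ρ ln ρ < ∞, then
ρ_n → ρ strongly in L¹. -/
theorem stmt15 {X : Type*} [MeasurableSpace X] (μ : Measure X) [IsFiniteMeasure μ]
    (ρn : ℕ → X → ℝ) (ρ : X → ℝ)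
    (hρn_int : ∀ n, Integrable (ρn n) μ) (hρ_int : Integrable ρ μ)
    (hρn_pos : ∀ n, ∀ᵐ x ∂μ, 0 ≤ ρn n x)
    (hlog_int : Integrable (fun x => ρ x * Real.log (ρ x)) μ)
    (hlogn_int : ∀ n, Integrable (fun x => ρn n x * Real.log (ρn n x)) μ)
    (hunif : ∃ C : ℝ, ∀ n, ∫ x, |ρn n x * Real.log (ρn n x)| ∂μ ≤ C)
    (hweak : WeakL1Conv μ ρn ρ)
    (hlimsup : limsup (fun n => ∫ x, ρn n x * Real.log (ρn n x) ∂μ) atTop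
        ≤ ∫ x, ρ x * Real.log (ρ x) ∂μ) :
    Tendsto (fun n => ∫ x, |ρn n x - ρ x| ∂μ) atTop (nhds 0) := by
  have am := hρ_int.1.aemeasurable
  set ρ' := am.mk ρ with hρ'def
  have hρ'meas : Measurable ρ' := am.measurable_mk
  have hρρ' : ρ =ᵐ[μ] ρ' := am.ae_eq_mk
  have hρ'int : Integrable ρ' μ := hρ_int.congr hρρ'
  -- nonnegativity of ρ
  have hρ_pos : ∀ᵐ x ∂μ, 0 ≤ ρ x := by
    set S : ℕ → Set X := fun k => {x | ρ' x ≤ -(1/((k:ℝ)+1))} with hS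
    have hk : ∀ k : ℕ, μ (S k) = 0 := by
      intro k
      have hcpos : (0:ℝ) < 1/((k:ℝ)+1) := by positivity
      have ms : MeasurableSet (S k) := measurableSet_le hρ'meas measurable_const
      set φ : X → ℝ := (S k).indicator (fun _ => 1) with hφ
      have hφm : MemLp φ ⊤ μ := by
        refine memLp_top_of_bound ((measurable_const.indicator ms).aestronglyMeasurable) 1
          (ae_of_all _ fun x => ?_)
        rw [Real.norm_eq_abs, hφ]
        by_cases hx : x ∈ S k
        · rw [Set.indicator_of_mem hx]; norm_num
        · rw [Set.indicator_of_notMem hx]; norm_num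
      have hnn : ∀ n, 0 ≤ ∫ x, ρn n x * φ x ∂μ := fun n =>
        integral_nonneg_of_ae (by
          filter_upwards [hρn_pos n] with x hx
          exact mul_nonneg hx (Set.indicator_nonneg (fun _ _ => zero_le_one) x))
      have hLpos : 0 ≤ ∫ x, ρ x * φ x ∂μ :=
        ge_of_tendsto (hweak φ hφm) (Eventually.of_forall hnn)
      have heq : ∫ x, ρ x * φ x ∂μ = ∫ x in S k, ρ' x ∂μ := by
        rw [show ∫ x, ρ x * φ x ∂μ = ∫ x, (S k).indicator ρ' x ∂μ from
          integral_congr_ae (by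
            filter_upwards [hρρ'] with x hx
            rw [hx, hφ]
            by_cases hm : x ∈ S k
            · rw [Set.indicator_of_mem hm, Set.indicator_of_mem hm, mul_one]
            · rw [Set.indicator_of_notMem hm, Set.indicator_of_notMem hm, mul_zero]),
          integral_indicator ms]
      have hle : ∫ x in S k, ρ' x ∂μ ≤ ∫ _x in S k, (-(1/((k:ℝ)+1))) ∂μ :=
        setIntegral_mono_on hρ'int.integrableOn
          (integrableOn_const (measure_ne_top μ (S k))) ms (fun x hx => hx)
      rw [setIntegral_const, smul_eq_mul] at hle
      rw [heq] at hLpos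
      have h1 : 0 ≤ (μ (S k)).toReal * (-(1/((k:ℝ)+1))) := hLpos.trans hle
      have h2 : (μ (S k)).toReal = 0 := by
        nlinarith [ENNReal.toReal_nonneg (a := μ (S k))]
      exact ((ENNReal.toReal_eq_zero_iff _).mp h2).resolve_right (measure_ne_top μ (S k))
    have hnull : μ {x | ρ' x < 0} = 0 := by
      refine measure_mono_null ?_ (measure_iUnion_null hk)
      intro x hx
      simp only [Set.mem_setOf_eq] at hx
      obtain ⟨k, hk'⟩ := exists_nat_one_div_lt (neg_pos.mpr hx)
      exact Set.mem_iUnion.mpr ⟨k, by simp only [hS, Set.mem_setOf_eq]; linarith⟩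
    have h2 : ∀ᵐ x ∂μ, ¬ (ρ' x < 0) := by
      rw [ae_iff]
      simpa using hnull
    filter_upwards [hρρ', h2] with x hx h3
    rw [hx]
    exact not_lt.mp h3
  -- mass convergence
  have hmass : Tendsto (fun n => ∫ x, ρn n x ∂μ) atTop (nhds (∫ x, ρ x ∂μ)) := by
    have := hweak (fun _ => 1) (memLp_const 1)
    simpa using this
  -- midpoints
  set σ : ℕ → X → ℝ := fun n x => (ρn n x + ρ x)/2 with hσdef
  have hσ_int : ∀ n, Integrable (σ n) μ := fun n => ((hρn_int n).add hρ_int).div_const 2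
  have hσ_pos : ∀ n, ∀ᵐ x ∂μ, 0 ≤ σ n x := by
    intro n
    filter_upwards [hρn_pos n, hρ_pos] with x h1 h2
    simp only [hσdef]
    linarith
  have hσlog_asm : ∀ n, AEStronglyMeasurable (fun x => σ n x * Real.log (σ n x)) μ :=
    fun n => (hσ_int n).1.mul
      ((Real.measurable_log.comp_aemeasurable (hσ_int n).1.aemeasurable).aestronglyMeasurable)
  have hσlog_int : ∀ n, Integrable (fun x => σ n x * Real.log (σ n x)) μ := by
    intro n
    refine Integrable.mono'
      ((((hlogn_int n).abs.add hlog_int.abs).div_const 2).add (integrable_const (Real.exp (-1))))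
      (hσlog_asm n) ?_
    filter_upwards [hρn_pos n, hρ_pos] with x h1 h2
    have hlow := legendre (σ n x) 0 (by simp only [hσdef]; linarith)
    rw [zero_mul, zero_sub, zero_sub] at hlow
    have hup := sqdiff (ρn n x) (ρ x) h1 h2
    have hsq := sq_nonneg (Real.sqrt (ρn n x) - Real.sqrt (ρ x))
    rw [Real.norm_eq_abs, abs_le]
    constructor
    · have := Real.exp_pos (-1)
      have := abs_nonneg (ρn n x * Real.log (ρn n x))
      have := abs_nonneg (ρ x * Real.log (ρ x))
      simp only [Pi.add_apply]
      nlinarith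
    · have ha := le_abs_self (ρn n x * Real.log (ρn n x))
      have hb := le_abs_self (ρ x * Real.log (ρ x))
      have := Real.exp_pos (-1)
      simp only [Pi.add_apply]
      rw [show ((ρn n x + ρ x)/2 : ℝ) = σ n x from rfl] at hup
      nlinarith
  have hσw : ∀ φ : X → ℝ, MemLp φ ⊤ μ →
      Tendsto (fun n => ∫ x, σ n x * φ x ∂μ) atTop (nhds (∫ x, ρ x * φ x ∂μ)) := by
    intro φ hφ
    have hbdd : ∀ᵐ x ∂μ, ‖φ x‖ ≤ (eLpNorm φ ⊤ μ).toReal := by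
      filter_upwards [enorm_ae_le_eLpNormEssSup φ μ] with x hx
      have hne : eLpNormEssSup φ μ ≠ ⊤ := by
        rw [← eLpNorm_exponent_top]; exact hφ.2.ne
      calc ‖φ x‖ = (‖φ x‖ₑ).toReal := by simp
        _ ≤ (eLpNormEssSup φ μ).toReal := ENNReal.toReal_mono hne hx
        _ = (eLpNorm φ ⊤ μ).toReal := by rw [eLpNorm_exponent_top]
    have hint : ∀ g : X → ℝ, Integrable g μ → Integrable (fun x => g x * φ x) μ := by
      intro g hg
      have h2 := hg.bdd_mul hφ.1 hbdd
      exact h2.congr (ae_of_all _ fun x => mul_comm (φ x) (g x))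
    have heq : ∀ n, ∫ x, σ n x * φ x ∂μ
        = (∫ x, ρn n x * φ x ∂μ + ∫ x, ρ x * φ x ∂μ)/2 := by
      intro n
      rw [← integral_add (hint _ (hρn_int n)) (hint _ hρ_int), ← integral_div]
      refine integral_congr_ae (ae_of_all _ fun x => ?_)
      simp only [hσdef]
      ring
    simp only [heq]
    have h3 : Tendsto (fun n => (∫ x, ρn n x * φ x ∂μ + ∫ x, ρ x * φ x ∂μ)/2) atTop
        (nhds ((∫ x, ρ x * φ x ∂μ + ∫ x, ρ x * φ x ∂μ)/2)) :=
      ((hweak φ hφ).add (tendsto_const_nhds : Tendsto (fun _ : ℕ => ∫ x, ρ x * φ x ∂μ)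
        atTop (nhds (∫ x, ρ x * φ x ∂μ)))).div_const 2
    have h2 : (∫ x, ρ x * φ x ∂μ + ∫ x, ρ x * φ x ∂μ)/2 = ∫ x, ρ x * φ x ∂μ := by ring
    rw [h2] at h3
    exact h3
  -- notation
  set E : ℝ := ∫ x, ρ x * Real.log (ρ x) ∂μ with hE
  set En : ℕ → ℝ := fun n => ∫ x, ρn n x * Real.log (ρn n x) ∂μ with hEn
  set Sn : ℕ → ℝ := fun n => ∫ x, σ n x * Real.log (σ n x) ∂μ with hSn
  set Dn : ℕ → ℝ := fun n => En n + E - 2 * Sn n with hDn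
  have hDn_eq : ∀ n, Dn n = ∫ x, (ρn n x * Real.log (ρn n x) + ρ x * Real.log (ρ x)
      - 2 * (σ n x * Real.log (σ n x))) ∂μ := by
    intro n
    have i1 : Integrable (fun x => ρn n x * Real.log (ρn n x) + ρ x * Real.log (ρ x)) μ :=
      (hlogn_int n).add hlog_int
    have i2 : Integrable (fun x => 2 * (σ n x * Real.log (σ n x))) μ :=
      (hσlog_int n).const_mul 2
    rw [integral_sub i1 i2, integral_add (hlogn_int n) hlog_int, integral_const_mul]
  have hD0 : ∀ n, 0 ≤ Dn n := by
    intro n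
    rw [hDn_eq n]
    refine integral_nonneg_of_ae ?_
    filter_upwards [hρn_pos n, hρ_pos] with x h1 h2
    have := sqdiff (ρn n x) (ρ x) h1 h2
    have hsq := sq_nonneg (Real.sqrt (ρn n x) - Real.sqrt (ρ x))
    have hσeq : σ n x = (ρn n x + ρ x)/2 := rfl
    simp only [Pi.zero_apply]
    rw [hσeq]
    linarith
  -- boundedness of En
  obtain ⟨C, hC⟩ := hunif
  have hEnbdd : IsBoundedUnder (· ≤ ·) atTop En :=
    isBoundedUnder_of ⟨C, fun n => by
      calc En n ≤ |En n| := le_abs_self _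
        _ ≤ ∫ x, |ρn n x * Real.log (ρn n x)| ∂μ := by
            rw [hEn]
            exact norm_integral_le_integral_norm
              (f := fun x => ρn n x * Real.log (ρn n x)) (μ := μ)
        _ ≤ C := hC n⟩
  -- Dn → 0
  have hDto : Tendsto Dn atTop (nhds 0) := by
    rw [NormedAddCommGroup.tendsto_nhds_zero]
    intro ε hε
    have hub : ∀ᶠ n in atTop, En n < E + ε/4 :=
      eventually_lt_of_limsup_lt (lt_of_le_of_lt hlimsup (by linarith)) hEnbdd
    have hlb : ∀ᶠ n in atTop, E - ε/4 ≤ Sn n :=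
      lsc μ σ ρ ρ' hρ'meas hρρ' hρ_int hρ_pos hlog_int hσ_int hσ_pos hσlog_int hσw
        (by linarith : (0:ℝ) < ε/4)
    filter_upwards [hub, hlb] with n h1 h2
    rw [Real.norm_eq_abs, abs_of_nonneg (hD0 n)]
    have : Dn n = En n + E - 2 * Sn n := rfl
    linarith
  -- the square-difference integrals
  have hsqasm : ∀ n, AEStronglyMeasurable
      (fun x => (Real.sqrt (ρn n x) - Real.sqrt (ρ x))^2) μ := by
    intro n
    have h1 : AEStronglyMeasurable (fun x => Real.sqrt (ρn n x) - Real.sqrt (ρ x)) μ :=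
      (Real.continuous_sqrt.comp_aestronglyMeasurable (hρn_int n).1).sub
        (Real.continuous_sqrt.comp_aestronglyMeasurable hρ_int.1)
    have : (fun x => (Real.sqrt (ρn n x) - Real.sqrt (ρ x))^2)
        = fun x => (Real.sqrt (ρn n x) - Real.sqrt (ρ x))
          * (Real.sqrt (ρn n x) - Real.sqrt (ρ x)) := by
      ext x; ring
    rw [this]
    exact h1.mul h1
  have hsq_int : ∀ n, Integrable (fun x => (Real.sqrt (ρn n x) - Real.sqrt (ρ x))^2) μ := by
    intro n
    refine Integrable.mono' (((hρn_int n).add hρ_int).const_mul 2) (hsqasm n) ?_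
    filter_upwards [hρn_pos n, hρ_pos] with x h1 h2
    simp only [Pi.add_apply]
    rw [Real.norm_eq_abs, abs_of_nonneg (sq_nonneg _)]
    have e1 := Real.sq_sqrt h1
    have e2 := Real.sq_sqrt h2
    have := Real.sqrt_nonneg (ρn n x)
    have := Real.sqrt_nonneg (ρ x)
    nlinarith [sq_nonneg (Real.sqrt (ρn n x) + Real.sqrt (ρ x))]
  have hQle : ∀ n, ∫ x, (Real.sqrt (ρn n x) - Real.sqrt (ρ x))^2 ∂μ ≤ 2 * Dn n := by
    intro n
    have i3 : Integrable (fun x => ρn n x * Real.log (ρn n x) + ρ x * Real.log (ρ x)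
        - 2 * (σ n x * Real.log (σ n x))) μ :=
      ((hlogn_int n).add hlog_int).sub ((hσlog_int n).const_mul 2)
    have i4 : Integrable (fun x => 2 * (ρn n x * Real.log (ρn n x) + ρ x * Real.log (ρ x)
        - 2 * (σ n x * Real.log (σ n x)))) μ := i3.const_mul 2
    rw [hDn_eq n, ← integral_const_mul]
    refine integral_mono_ae (hsq_int n) i4 ?_
    filter_upwards [hρn_pos n, hρ_pos] with x h1 h2
    have := sqdiff (ρn n x) (ρ x) h1 h2
    have hσeq : σ n x = (ρn n x + ρ x)/2 := rfl
    rw [hσeq]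
    linarith
  -- final squeeze
  set g : ℕ → ℝ := fun n => Real.sqrt (Dn n + 1/((n:ℝ)+1)) * (1 + (2 * ∫ x, ρ x ∂μ + 1))
    with hg
  have hgto : Tendsto g atTop (nhds 0) := by
    have h1 : Tendsto (fun n : ℕ => Dn n + 1/((n:ℝ)+1)) atTop (nhds (0 + 0)) :=
      hDto.add tendsto_one_div_add_atTop_nhds_zero_nat
    rw [add_zero] at h1
    have h2 := (Real.continuous_sqrt.tendsto 0).comp h1
    rw [Real.sqrt_zero] at h2
    have h3 := h2.mul_const (1 + (2 * ∫ x, ρ x ∂μ + 1))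
    rw [zero_mul] at h3
    exact h3
  refine tendsto_of_tendsto_of_tendsto_of_le_of_le' tendsto_const_nhds hgto
    (Eventually.of_forall fun n =>
      integral_nonneg_of_ae (ae_of_all _ fun x => abs_nonneg _)) ?_
  have hev : ∀ᶠ n in atTop, ∫ x, ρn n x ∂μ ≤ ∫ x, ρ x ∂μ + 1 :=
    (hmass.eventually (eventually_lt_nhds (lt_add_of_pos_right _ one_pos))).mono
      fun n h => h.le
  filter_upwards [hev] with n hn
  set εn : ℝ := Real.sqrt (Dn n + 1/((n:ℝ)+1)) with hεn
  have hDpos : 0 < Dn n + 1/((n:ℝ)+1) := by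
    have := hD0 n
    positivity
  have hεpos : 0 < εn := Real.sqrt_pos.mpr hDpos
  have step1 : ∫ x, |ρn n x - ρ x| ∂μ ≤
      ∫ x, ((Real.sqrt (ρn n x) - Real.sqrt (ρ x))^2/(2*εn) + εn*(ρn n x + ρ x)) ∂μ := by
    refine integral_mono_ae ((hρn_int n).sub hρ_int).abs
      (((hsq_int n).div_const (2*εn)).add (((hρn_int n).add hρ_int).const_mul εn)) ?_
    filter_upwards [hρn_pos n, hρ_pos] with x h1 h2
    exact amgm (ρn n x) (ρ x) εn h1 h2 hεpos
  have step2 : ∫ x, ((Real.sqrt (ρn n x) - Real.sqrt (ρ x))^2/(2*εn) + εn*(ρn n x + ρ x)) ∂μ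
      = (∫ x, (Real.sqrt (ρn n x) - Real.sqrt (ρ x))^2 ∂μ)/(2*εn)
        + εn * (∫ x, ρn n x ∂μ + ∫ x, ρ x ∂μ) := by
    have i5 : Integrable (fun x => (Real.sqrt (ρn n x) - Real.sqrt (ρ x))^2/(2*εn)) μ :=
      (hsq_int n).div_const (2*εn)
    have i6 : Integrable (fun x => εn * (ρn n x + ρ x)) μ :=
      ((hρn_int n).add hρ_int).const_mul εn
    have i7 : Integrable (fun x => ρn n x + ρ x) μ := (hρn_int n).add hρ_int
    rw [integral_add i5 i6, integral_div, integral_const_mul, integral_add (hρn_int n) hρ_int]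
  have step3 : (∫ x, (Real.sqrt (ρn n x) - Real.sqrt (ρ x))^2 ∂μ)/(2*εn) ≤ εn := by
    have h1 : (∫ x, (Real.sqrt (ρn n x) - Real.sqrt (ρ x))^2 ∂μ)/(2*εn) ≤ (2*Dn n)/(2*εn) :=
      (div_le_div_iff_of_pos_right (by positivity)).mpr (hQle n)
    refine h1.trans ?_
    rw [mul_div_mul_left _ _ (two_ne_zero), div_le_iff₀ hεpos]
    have := Real.mul_self_sqrt hDpos.le
    rw [hεn]
    nlinarith [hD0 n, one_div_pos.mpr (by positivity : (0:ℝ) < (n:ℝ)+1)]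
  have step4 : εn * (∫ x, ρn n x ∂μ + ∫ x, ρ x ∂μ) ≤ εn * (2 * ∫ x, ρ x ∂μ + 1) := by
    refine mul_le_mul_of_nonneg_left (by linarith) hεpos.le
  calc ∫ x, |ρn n x - ρ x| ∂μ
      ≤ (∫ x, (Real.sqrt (ρn n x) - Real.sqrt (ρ x))^2 ∂μ)/(2*εn)
        + εn * (∫ x, ρn n x ∂μ + ∫ x, ρ x ∂μ) := step1.trans_eq step2
    _ ≤ εn + εn * (2 * ∫ x, ρ x ∂μ + 1) := by linarith
    _ = g n := by rw [hg]; ring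
end
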